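/- With state holding (every agent i delays its state z_i by exactly d_i steps so that all followers of i, including i itself, measure z_i(t − d_i)), the lifted extended system {Â, B̂_i, Ĉ_i; m} of dimension n̂ = n + Σ_i(d_i+1)n_i satisfies, for every λ ∈ ℂ and every subset s ⊆ {1,...,m}: rank [λI − Â, B̂_s; Ĉ_{m−s}, 0] = rank [λI_n − A, B_s; C_{m−s}, 0] + Σ_{i=1}^m (d_i+1)n_i + Σ_{i ∈ N_{m−s} ∩ s} n_i. -/

import Mathlib

open Matrix Complex

noncomputable section

variable {n m : ℕ}

/-- Fixed-mode pencil `[λI − A, B_s; C_{m−s}, 0]` of the original system, in a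
rank-equivalent form (zeroed columns/rows instead of deleted ones). -/
def pencil (p q : Fin m → ℕ)
    (A : Matrix (Fin n) (Fin n) ℝ)
    (B : ∀ i, Matrix (Fin n) (Fin (p i)) ℝ)
    (C : ∀ i, Matrix (Fin (q i)) (Fin n) ℝ)
    (lam : ℂ) (s : Finset (Fin m)) :
    Matrix (Fin n ⊕ Σ i, Fin (q i)) (Fin n ⊕ Σ i, Fin (p i)) ℂ :=
  fromBlocks (lam • 1 - A.map ofReal)
    (fun r c => if c.1 ∈ s then ofReal ((B c.1) r c.2) else 0)
    (fun r c => if r.1 ∈ s then 0 else ofReal ((C r.1) r.2 c))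
    0

/-- Index type of the lifted shift registers: agent `j` stores
`z_j(t), z_j(t−1), ..., z_j(t−D j)`. -/
abbrev LiftZ (nd D : Fin m → ℕ) := Σ j : Fin m, Fin (D j + 1) × Fin (nd j)

/-- The lifted `Ã`: block diagonal with `A` and the shift registers. -/
def Alift (nd D : Fin m → ℕ) (A : Matrix (Fin n) (Fin n) ℝ) :
    Matrix (Fin n ⊕ LiftZ nd D) (Fin n ⊕ LiftZ nd D) ℂ :=
  fromBlocks (A.map ofReal) 0 0
    (fun r c =>
      if h : r.1 = c.1 then
        (if (r.2.1 : ℕ) = (c.2.1 : ℕ) + 1 ∧ h ▸ r.2.2 = c.2.2 then 1 else 0)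
      else 0)

/-- The lifted `B̃_i`: injects `u_i` into the plant and `v_i` into the head of
agent `i`'s shift register. -/
def Blift (p nd D : Fin m → ℕ) (B : ∀ i, Matrix (Fin n) (Fin (p i)) ℝ) (i : Fin m) :
    Matrix (Fin n ⊕ LiftZ nd D) (Fin (p i) ⊕ Fin (nd i)) ℂ :=
  fromBlocks ((B i).map ofReal) 0 0
    (fun r c =>
      if h : r.1 = i then
        (if (r.2.1 : ℕ) = 0 ∧ h ▸ r.2.2 = c then 1 else 0)
      else 0)

/-- The lifted `C̃_i`: outputs `y_i = C_i x` together with, for each neighbor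
`j ∈ N i`, the delayed state `z_j(t − del j i)` (register `del j i` in agent
`j`'s shift chain). -/
def Clift (q nd D : Fin m → ℕ) (C : ∀ i, Matrix (Fin (q i)) (Fin n) ℝ)
    (N : Fin m → Finset (Fin m)) (del : Fin m → Fin m → ℕ) (i : Fin m) :
    Matrix (Fin (q i) ⊕ Σ j, Fin (nd j)) (Fin n ⊕ LiftZ nd D) ℂ :=
  fromBlocks ((C i).map ofReal) 0 0
    (fun r c =>
      if h : c.1 = r.1 then
        (if r.1 ∈ N i ∧ (c.2.1 : ℕ) = del r.1 i ∧ r.2 = h ▸ c.2.2 then 1 else 0)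
      else 0)

/-- Fixed-mode pencil of the lifted extended system. -/
def liftPencil (p q nd D : Fin m → ℕ)
    (A : Matrix (Fin n) (Fin n) ℝ)
    (B : ∀ i, Matrix (Fin n) (Fin (p i)) ℝ)
    (C : ∀ i, Matrix (Fin (q i)) (Fin n) ℝ)
    (N : Fin m → Finset (Fin m)) (del : Fin m → Fin m → ℕ)
    (lam : ℂ) (s : Finset (Fin m)) :
    Matrix ((Fin n ⊕ LiftZ nd D) ⊕ Σ i, (Fin (q i) ⊕ Σ j, Fin (nd j)))
      ((Fin n ⊕ LiftZ nd D) ⊕ Σ i, (Fin (p i) ⊕ Fin (nd i))) ℂ :=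
  fromBlocks (lam • 1 - Alift nd D A)
    (fun r c => if c.1 ∈ s then Blift p nd D B c.1 r c.2 else 0)
    (fun r c => if r.1 ∈ s then 0 else Clift q nd D C N del r.1 r.2 c)
    0

end


noncomputable section

variable {n m : ℕ}

open Module


section Infra

variable {R : Type*} [Field R]

theorem myrank_submatrix {l m o p : Type*} [Fintype l] [Fintype m] [Fintype o] [Fintype p]
    [DecidableEq m] [DecidableEq p]
    (A : Matrix l m R) (e : o ≃ l) (f : p ≃ m) :
    (A.submatrix e f).rank = A.rank := by
  have h : (A.submatrix e f).mulVecLin =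
      ((LinearEquiv.funCongrLeft R R e).toLinearMap.comp A.mulVecLin).comp
        (LinearEquiv.funCongrLeft R R f.symm).toLinearMap := by
    apply LinearMap.ext; intro x
    exact Matrix.submatrix_mulVec_equiv A x e f
  rw [Matrix.rank, h, LinearMap.range_comp_of_range_eq_top _ (by
      rw [LinearMap.range_eq_top]; exact (LinearEquiv.funCongrLeft R R f.symm).surjective),
    LinearMap.range_comp, Matrix.rank]
  exact ((Submodule.equivMapOfInjective _ (LinearEquiv.funCongrLeft R R e).injective
    _).finrank_eq).symm

theorem myrank_fromBlocks_diag {l m o p : Type*} [Fintype l] [Fintype m] [Fintype o] [Fintype p]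
    [DecidableEq m] [DecidableEq p]
    (A : Matrix l m R) (D : Matrix o p R) :
    (fromBlocks A 0 0 D).rank = A.rank + D.rank := by
  classical
  let L₁ : (l → R) →ₗ[R] (l ⊕ o → R) :=
    { toFun := fun x => Sum.elim x 0
      map_add' := by intro x y; ext (i|i) <;> simp
      map_smul' := by intro c x; ext (i|i) <;> simp }
  let L₂ : (o → R) →ₗ[R] (l ⊕ o → R) :=
    { toFun := fun x => Sum.elim 0 x
      map_add' := by intro x y; ext (i|i) <;> simp
      map_smul' := by intro c x; ext (i|i) <;> simp }
  have hL₁ : Function.Injective L₁ := by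
    intro x y hxy; ext i; exact congrFun hxy (Sum.inl i)
  have hL₂ : Function.Injective L₂ := by
    intro x y hxy; ext i; exact congrFun hxy (Sum.inr i)
  have hmv : ∀ x : m ⊕ p → R, (fromBlocks A 0 0 D) *ᵥ x =
      L₁ (A *ᵥ (x ∘ Sum.inl)) + L₂ (D *ᵥ (x ∘ Sum.inr)) := by
    intro x
    rw [Matrix.fromBlocks_mulVec]
    ext (i|i) <;> simp [L₁, L₂]
  have hrange : LinearMap.range (fromBlocks A 0 0 D).mulVecLin =
      (LinearMap.range A.mulVecLin).map L₁ ⊔ (LinearMap.range D.mulVecLin).map L₂ := by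
    apply le_antisymm
    · rintro v ⟨x, rfl⟩
      rw [Matrix.mulVecLin_apply, hmv]
      exact Submodule.add_mem_sup ⟨A *ᵥ (x ∘ Sum.inl), ⟨_, rfl⟩, rfl⟩
        ⟨D *ᵥ (x ∘ Sum.inr), ⟨_, rfl⟩, rfl⟩
    · rw [sup_le_iff]
      constructor
      · rintro v ⟨w, ⟨x, rfl⟩, rfl⟩
        refine ⟨Sum.elim x 0, ?_⟩
        rw [Matrix.mulVecLin_apply, hmv, Matrix.mulVecLin_apply]
        have h1 : (Sum.elim x (0 : p → R)) ∘ Sum.inl = x := rfl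
        have h2 : (Sum.elim x (0 : p → R)) ∘ Sum.inr = 0 := rfl
        rw [h1, h2, Matrix.mulVec_zero, map_zero, add_zero]
      · rintro v ⟨w, ⟨x, rfl⟩, rfl⟩
        refine ⟨Sum.elim 0 x, ?_⟩
        rw [Matrix.mulVecLin_apply, hmv, Matrix.mulVecLin_apply]
        have h1 : (Sum.elim (0 : m → R) x) ∘ Sum.inl = 0 := rfl
        have h2 : (Sum.elim (0 : m → R) x) ∘ Sum.inr = x := rfl
        rw [h1, h2, Matrix.mulVec_zero, map_zero, zero_add]
  have hdisj : Disjoint ((LinearMap.range A.mulVecLin).map L₁)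
      ((LinearMap.range D.mulVecLin).map L₂) := by
    rw [disjoint_iff]
    ext v
    simp only [Submodule.mem_inf, Submodule.mem_bot]
    constructor
    · rintro ⟨⟨w₁, _, rfl⟩, ⟨w₂, _, h₂⟩⟩
      ext (i|i)
      · have := congrFun h₂.symm (Sum.inl i)
        simpa [L₁, L₂] using this
      · simp [L₁]
    · rintro rfl
      exact ⟨⟨0, ⟨0, by simp⟩, by simp⟩, ⟨0, ⟨0, by simp⟩, by simp⟩⟩
  have hfr := Submodule.finrank_sup_add_finrank_inf_eq
    ((LinearMap.range A.mulVecLin).map L₁) ((LinearMap.range D.mulVecLin).map L₂)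
  rw [hdisj.eq_bot, finrank_bot, add_zero] at hfr
  rw [Matrix.rank, hrange, hfr, Matrix.rank, Matrix.rank]
  congr 1
  · exact ((Submodule.equivMapOfInjective L₁ hL₁ _).finrank_eq).symm
  · exact ((Submodule.equivMapOfInjective L₂ hL₂ _).finrank_eq).symm

end Infra

section Zpart


def Zblock (nd D : Fin m → ℕ) (N : Fin m → Finset (Fin m)) (lam : ℂ) (s : Finset (Fin m)) :
    Matrix ((LiftZ nd D) ⊕ Σ _i : Fin m, Σ j, Fin (nd j))
      ((LiftZ nd D) ⊕ Σ i, Fin (nd i)) ℂ :=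
  fromBlocks
    (fun r c => (if r = c then lam else 0) -
      (if h : r.1 = c.1 then
        (if (r.2.1 : ℕ) = (c.2.1 : ℕ) + 1 ∧ h ▸ r.2.2 = c.2.2 then 1 else 0) else 0))
    (fun r c => if c.1 ∈ s then
      (if h : r.1 = c.1 then (if (r.2.1 : ℕ) = 0 ∧ h ▸ r.2.2 = c.2 then 1 else 0) else 0) else 0)
    (fun r c => if r.1 ∈ s then 0 else
      (if h : c.1 = r.2.1 then
        (if r.2.1 ∈ N r.1 ∧ (c.2.1 : ℕ) = D r.2.1 ∧ r.2.2 = h ▸ c.2.2 then 1 else 0) else 0))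
    0

variable (nd D : Fin m → ℕ) (N : Fin m → Finset (Fin m)) (lam : ℂ) (s : Finset (Fin m))

theorem LiftZ_eq_iff (z z' : LiftZ nd D) :
    z = z' ↔ z.1 = z'.1 ∧ (z.2.1 : ℕ) = (z'.2.1 : ℕ) ∧ (z.2.2 : ℕ) = (z'.2.2 : ℕ) := by
  constructor
  · rintro rfl; exact ⟨rfl, rfl, rfl⟩
  · rcases z with ⟨j, k, a⟩; rcases z' with ⟨j', k', a'⟩
    rintro ⟨h1, h2, h3⟩
    dsimp at h1; subst h1
    simp_all [Sigma.mk.inj_iff, Prod.ext_iff, Fin.ext_iff]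

theorem Z_tl (z z' : LiftZ nd D) :
    Zblock nd D N lam s (Sum.inl z) (Sum.inl z') =
      (if z = z' then lam else 0) -
        (if z.1 = z'.1 ∧ (z.2.1 : ℕ) = (z'.2.1 : ℕ) + 1 ∧ (z.2.2 : ℕ) = (z'.2.2 : ℕ)
          then 1 else 0) := by
  rcases z with ⟨j, k, a⟩; rcases z' with ⟨j', k', a'⟩
  show (_ : ℂ) - _ = _
  congr 1
  by_cases h : j = j'
  · subst h
    simp [Zblock, fromBlocks, Fin.ext_iff]
  · simp [Zblock, fromBlocks, h]

theorem Z_tr (z : LiftZ nd D) (i : Fin m) (b : Fin (nd i)) :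
    Zblock nd D N lam s (Sum.inl z) (Sum.inr ⟨i, b⟩) =
      (if i ∈ s ∧ z.1 = i ∧ (z.2.1 : ℕ) = 0 ∧ (z.2.2 : ℕ) = (b : ℕ) then 1 else 0) := by
  rcases z with ⟨j, k, a⟩
  by_cases h : j = i
  · subst h
    by_cases hs : j ∈ s <;> simp [Zblock, fromBlocks, hs, Fin.ext_iff, and_assoc, -Fin.val_eq_zero_iff]
  · simp [Zblock, fromBlocks, h]

theorem Z_bl (i : Fin m) (jb : Σ j, Fin (nd j)) (z' : LiftZ nd D) :
    Zblock nd D N lam s (Sum.inr ⟨i, jb⟩) (Sum.inl z') =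
      (if i ∉ s ∧ jb.1 ∈ N i ∧ z'.1 = jb.1 ∧ (z'.2.1 : ℕ) = D jb.1 ∧
          (jb.2 : ℕ) = (z'.2.2 : ℕ) then 1 else 0) := by
  rcases jb with ⟨j, b⟩; rcases z' with ⟨j', k', a'⟩
  by_cases h : j' = j
  · subst h
    by_cases hs : i ∈ s <;> simp [Zblock, fromBlocks, hs, Fin.ext_iff, and_assoc, -Fin.val_eq_zero_iff]
  · by_cases hs : i ∈ s <;> simp [Zblock, fromBlocks, hs, h]

theorem Z_br (i : Fin m) (jb : Σ j, Fin (nd j)) (c : Σ i, Fin (nd i)) :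
    Zblock nd D N lam s (Sum.inr ⟨i, jb⟩) (Sum.inr c) = 0 := by
  simp [Zblock, fromBlocks]

/-! ### column identities -/

abbrev ZR (nd D : Fin m → ℕ) := (LiftZ nd D) ⊕ Σ _i : Fin m, Σ j, Fin (nd j)

/-- standard basis vector on the Z-row space -/
def ee (nd D : Fin m → ℕ) (x : ZR nd D) : ZR nd D → ℂ := Pi.single x 1

theorem ee_apply (x r : ZR nd D) : ee nd D x r = if r = x then 1 else 0 := by
  simp [ee, Pi.single_apply]

theorem Zcol_inr_mem (i : Fin m) (b : Fin (nd i)) (hi : i ∈ s) :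
    (fun r => Zblock nd D N lam s r (Sum.inr ⟨i, b⟩)) = ee nd D (Sum.inl ⟨i, (0, b)⟩) := by
  funext r
  rcases r with z | ⟨i', jb⟩
  · rw [Z_tr, ee_apply]
    simp [LiftZ_eq_iff, hi, eq_comm]
  · rw [Z_br, ee_apply]; simp

theorem Zcol_inr_zero (i : Fin m) (b : Fin (nd i)) (hi : i ∉ s) :
    (fun r => Zblock nd D N lam s r (Sum.inr ⟨i, b⟩)) = 0 := by
  funext r
  rcases r with z | ⟨i', jb⟩
  · rw [Z_tr]; simp [hi]
  · rw [Z_br]; rfl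

theorem Zcol_inl_lt (j : Fin m) (k : Fin (D j + 1)) (a : Fin (nd j)) (hk : (k : ℕ) < D j) :
    (fun r => Zblock nd D N lam s r (Sum.inl ⟨j, (k, a)⟩)) =
      lam • ee nd D (Sum.inl ⟨j, (k, a)⟩) -
        ee nd D (Sum.inl ⟨j, (⟨(k : ℕ) + 1, by omega⟩, a)⟩) := by
  funext r
  rcases r with z | ⟨i', jb⟩
  · rw [Z_tl]
    simp only [Pi.sub_apply, Pi.smul_apply, ee_apply, Sum.inl.injEq, LiftZ_eq_iff,
      smul_eq_mul, mul_ite, mul_one, mul_zero]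
  · rw [Z_bl, if_neg]
    · simp [ee_apply]
    · rintro ⟨-, -, h3, h4, -⟩
      rw [show (⟨j, (k, a)⟩ : LiftZ nd D).1 = j from rfl] at h3
      subst h3
      exact absurd (show (k : ℕ) = D jb.1 from h4) (by omega)

theorem Zcol_inl_last_notNS (j : Fin m) (a : Fin (nd j)) (hj : j ∉ (sᶜ).biUnion N) :
    (fun r => Zblock nd D N lam s r (Sum.inl ⟨j, (Fin.last (D j), a)⟩)) =
      lam • ee nd D (Sum.inl ⟨j, (Fin.last (D j), a)⟩) := by
  funext r
  rcases r with z | ⟨i', jb⟩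
  · rw [Z_tl]
    have hneg : ¬(z.1 = (⟨j, (Fin.last (D j), a)⟩ : LiftZ nd D).1 ∧
        (z.2.1 : ℕ) = ((⟨j, (Fin.last (D j), a)⟩ : LiftZ nd D).2.1 : ℕ) + 1 ∧
        (z.2.2 : ℕ) = ((⟨j, (Fin.last (D j), a)⟩ : LiftZ nd D).2.2 : ℕ)) := by
      rcases z with ⟨jz, kz, az⟩
      rintro ⟨h1, h2, -⟩
      rw [show (⟨jz, (kz, az)⟩ : LiftZ nd D).1 = jz from rfl] at h1
      dsimp at h1
      subst h1
      have := kz.isLt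
      rw [show ((⟨jz, (Fin.last (D jz), a)⟩ : LiftZ nd D).2.1 : ℕ) = D jz from rfl] at h2
      exact absurd (show (kz : ℕ) = D jz + 1 from h2) (by omega)
    rw [if_neg hneg, sub_zero]
    simp [ee_apply, mul_comm]
  · rw [Z_bl, if_neg]
    · simp [ee_apply]
    · rintro ⟨his, hNi, h3, -, -⟩
      rw [show (⟨j, (Fin.last (D j), a)⟩ : LiftZ nd D).1 = j from rfl] at h3
      exact hj (Finset.mem_biUnion.mpr ⟨i', Finset.mem_compl.mpr his, h3 ▸ hNi⟩)


abbrev ZT (nd D : Fin m → ℕ) (F : Finset (Fin m)) :=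
  (LiftZ nd D) ⊕ (Σ j : {x : Fin m // x ∈ F}, Fin (nd j.1))

def Zfam (F : Finset (Fin m)) : ZT nd D F → (ZR nd D → ℂ)
  | .inl z => if z.1 ∈ s then ee nd D (Sum.inl z)
      else fun r => Zblock nd D N lam s r (Sum.inl z)
  | .inr ⟨⟨j, _⟩, a⟩ => fun r => Zblock nd D N lam s r (Sum.inl ⟨j, (Fin.last (D j), a)⟩)

theorem single_mem_span (j : Fin m) (hj : j ∈ s) (a : Fin (nd j)) :
    ∀ (t : ℕ) (ht : t < D j + 1),
      ee nd D (Sum.inl ⟨j, (⟨t, ht⟩, a)⟩) ∈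
        Submodule.span ℂ (Set.range (Zblock nd D N lam s)ᵀ) := by
  intro t
  induction t with
  | zero =>
    intro ht
    rw [show (⟨0, ht⟩ : Fin (D j + 1)) = 0 from Fin.ext (by simp),
      ← Zcol_inr_mem nd D N lam s j a hj]
    exact Submodule.subset_span ⟨Sum.inr ⟨j, a⟩, rfl⟩
  | succ t IH =>
    intro ht
    have hk : ((⟨t, by omega⟩ : Fin (D j + 1)) : ℕ) < D j := by
      simpa using (by omega : t < D j)
    have hcol := Zcol_inl_lt nd D N lam s j ⟨t, by omega⟩ a hk
    have key : ee nd D (Sum.inl ⟨j, (⟨t + 1, ht⟩, a)⟩) =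
        lam • ee nd D (Sum.inl ⟨j, (⟨t, by omega⟩, a)⟩) -
          (fun r => Zblock nd D N lam s r (Sum.inl ⟨j, (⟨t, by omega⟩, a)⟩)) := by
      rw [hcol, sub_sub_cancel]
    rw [key]
    exact sub_mem (Submodule.smul_mem _ _ (IH _))
      (Submodule.subset_span ⟨Sum.inl ⟨j, (⟨t, by omega⟩, a)⟩, rfl⟩)

theorem Zfam_span :
    Submodule.span ℂ (Set.range (Zfam nd D N lam s ((sᶜ).biUnion N ∩ s))) =
      Submodule.span ℂ (Set.range (Zblock nd D N lam s)ᵀ) := by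
  apply le_antisymm
  · rw [Submodule.span_le]
    rintro _ ⟨t, rfl⟩
    rcases t with z | ⟨⟨j, hj⟩, a⟩
    · by_cases hz : z.1 ∈ s
      · rcases z with ⟨j, k, a⟩
        rw [Zfam, if_pos hz]
        exact single_mem_span nd D N lam s j hz a k.1 k.isLt
      · rw [Zfam, if_neg hz]
        exact Submodule.subset_span ⟨Sum.inl z, rfl⟩
    · exact Submodule.subset_span ⟨Sum.inl ⟨j, (Fin.last (D j), a)⟩, rfl⟩
  · rw [Submodule.span_le]
    rintro _ ⟨c, rfl⟩
    have hcol : (Zblock nd D N lam s)ᵀ c = fun r => Zblock nd D N lam s r c := rfl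
    rw [hcol]
    rcases c with ⟨j, k, a⟩ | ⟨i, b⟩
    · by_cases hjs : j ∈ s
      · by_cases hk : (k : ℕ) < D j
        · rw [Zcol_inl_lt nd D N lam s j k a hk]
          refine sub_mem (Submodule.smul_mem _ _ ?_) ?_
          · exact Submodule.subset_span ⟨Sum.inl ⟨j, (k, a)⟩, by simp [Zfam, hjs]⟩
          · exact Submodule.subset_span ⟨Sum.inl ⟨j, (⟨(k : ℕ) + 1, by omega⟩, a)⟩,
              by simp [Zfam, hjs]⟩
        · have hlast : k = Fin.last (D j) := Fin.ext (by have := k.isLt; simp; omega)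
          subst hlast
          by_cases hNS : j ∈ (sᶜ).biUnion N
          · exact Submodule.subset_span
              ⟨Sum.inr ⟨⟨j, Finset.mem_inter.mpr ⟨hNS, hjs⟩⟩, a⟩, rfl⟩
          · rw [Zcol_inl_last_notNS nd D N lam s j a hNS]
            exact Submodule.smul_mem _ _
              (Submodule.subset_span ⟨Sum.inl ⟨j, (Fin.last (D j), a)⟩, by simp [Zfam, hjs]⟩)
      · exact Submodule.subset_span ⟨Sum.inl ⟨j, (k, a)⟩, by simp [Zfam, hjs]⟩
    · by_cases hi : i ∈ s
      · rw [Zcol_inr_mem nd D N lam s i b hi]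
        exact Submodule.subset_span ⟨Sum.inl ⟨i, (0, b)⟩, by simp [Zfam, hi]⟩
      · rw [Zcol_inr_zero nd D N lam s i b hi]
        exact zero_mem _


theorem Zfam_indep (hself : ∀ i, i ∈ N i) :
    LinearIndependent ℂ (Zfam nd D N lam s ((sᶜ).biUnion N ∩ s)) := by
  rw [Fintype.linearIndependent_iff]
  intro g hg
  have hrow : ∀ r, ∑ t : ZT nd D ((sᶜ).biUnion N ∩ s),
      g t * Zfam nd D N lam s ((sᶜ).biUnion N ∩ s) t r = 0 := by
    intro r
    have := congrFun hg r
    simpa [Finset.sum_apply] using this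
  -- Step 1 : coefficients of the `inr` part vanish
  have h1 : ∀ (u : Σ j : {x // x ∈ (sᶜ).biUnion N ∩ s}, Fin (nd j.1)), g (Sum.inr u) = 0 := by
    rintro ⟨⟨j, hjF⟩, a⟩
    obtain ⟨hjNS, hjs⟩ := Finset.mem_inter.mp hjF
    obtain ⟨i₀, hi₀, hji₀⟩ := Finset.mem_biUnion.mp hjNS
    rw [Finset.mem_compl] at hi₀
    have hr := hrow (Sum.inr ⟨i₀, ⟨j, a⟩⟩)
    rw [Fintype.sum_eq_single (Sum.inr ⟨⟨j, hjF⟩, a⟩ : ZT nd D ((sᶜ).biUnion N ∩ s)) ?_] at hr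
    · rw [show Zfam nd D N lam s ((sᶜ).biUnion N ∩ s) (Sum.inr ⟨⟨j, hjF⟩, a⟩)
          (Sum.inr ⟨i₀, ⟨j, a⟩⟩) = 1 from by
        show Zblock nd D N lam s _ _ = 1
        rw [Z_bl]
        exact if_pos ⟨hi₀, hji₀, rfl, rfl, rfl⟩] at hr
      simpa using hr
    · rintro (z | ⟨⟨j'', hF''⟩, a''⟩) ht
      · by_cases hz : z.1 ∈ s
        · rw [show Zfam nd D N lam s _ (Sum.inl z) = ee nd D (Sum.inl z) from by
            rw [Zfam, if_pos hz], ee_apply, if_neg (by simp), mul_zero]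
        · rw [show Zfam nd D N lam s _ (Sum.inl z) (Sum.inr ⟨i₀, ⟨j, a⟩⟩) = 0 from by
            rw [Zfam, if_neg hz]
            show Zblock nd D N lam s (Sum.inr ⟨i₀, ⟨j, a⟩⟩) (Sum.inl z) = 0
            rw [Z_bl]
            refine if_neg ?_
            rintro ⟨-, -, h3, -, -⟩
            exact hz (h3 ▸ hjs), mul_zero]
      · rw [show Zfam nd D N lam s _ (Sum.inr ⟨⟨j'', hF''⟩, a''⟩)
            (Sum.inr ⟨i₀, ⟨j, a⟩⟩) = 0 from by
          show Zblock nd D N lam s _ _ = 0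
          rw [Z_bl]
          refine if_neg ?_
          rintro ⟨-, -, h3, -, h5⟩
          have h3' : j'' = j := h3
          subst h3'
          have ha : a'' = a := Fin.ext h5.symm
          subst ha
          exact ht rfl, mul_zero]
  -- Step 2 : `inl` coefficients with `j ∈ s` vanish
  have h2 : ∀ (j : Fin m), j ∈ s → ∀ (k : Fin (D j + 1)) (a : Fin (nd j)),
      g (Sum.inl ⟨j, (k, a)⟩) = 0 := by
    intro j hjs k a
    have hr := hrow (Sum.inl ⟨j, (k, a)⟩)
    rw [Fintype.sum_eq_single (Sum.inl ⟨j, (k, a)⟩ : ZT nd D ((sᶜ).biUnion N ∩ s)) ?_] at hr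
    · rw [show Zfam nd D N lam s _ (Sum.inl ⟨j, (k, a)⟩) (Sum.inl ⟨j, (k, a)⟩) = 1 from by
        rw [Zfam, if_pos hjs, ee_apply, if_pos rfl]] at hr
      simpa using hr
    · rintro (z | u) ht
      · by_cases hz : z.1 ∈ s
        · rw [show Zfam nd D N lam s _ (Sum.inl z) = ee nd D (Sum.inl z) from by
            rw [Zfam, if_pos hz], ee_apply,
            if_neg (fun h => ht (congrArg Sum.inl (Sum.inl.inj h).symm)), mul_zero]
        · rw [show Zfam nd D N lam s _ (Sum.inl z) (Sum.inl ⟨j, (k, a)⟩) = 0 from by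
            rw [Zfam, if_neg hz]
            show Zblock nd D N lam s (Sum.inl ⟨j, (k, a)⟩) (Sum.inl z) = 0
            rw [Z_tl, if_neg (fun h => hz (by rw [← h]; exact hjs)),
              if_neg (by rintro ⟨h3, -, -⟩; exact hz (h3 ▸ hjs)), sub_zero], mul_zero]
      · rw [h1 u, zero_mul]
  -- Step 3 : `inl` coefficients with `j ∉ s` vanish
  have h3 : ∀ (j : Fin m), j ∉ s → ∀ (a : Fin (nd j)) (tt : ℕ) (k : Fin (D j + 1)),
      D j ≤ (k : ℕ) + tt → g (Sum.inl ⟨j, (k, a)⟩) = 0 := by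
    intro j hjs a tt
    induction tt with
    | zero =>
      intro k hk
      have hkl : k = Fin.last (D j) := Fin.ext (by have := k.isLt; simp; omega)
      subst hkl
      have hr := hrow (Sum.inr ⟨j, ⟨j, a⟩⟩)
      rw [Fintype.sum_eq_single
        (Sum.inl ⟨j, (Fin.last (D j), a)⟩ : ZT nd D ((sᶜ).biUnion N ∩ s)) ?_] at hr
      · rw [show Zfam nd D N lam s _ (Sum.inl ⟨j, (Fin.last (D j), a)⟩)
            (Sum.inr ⟨j, ⟨j, a⟩⟩) = 1 from by
          rw [Zfam, if_neg hjs]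
          show Zblock nd D N lam s _ _ = 1
          rw [Z_bl]
          exact if_pos ⟨hjs, hself j, rfl, rfl, rfl⟩] at hr
        simpa using hr
      · rintro (z | u) ht
        · by_cases hz : z.1 ∈ s
          · rw [show Zfam nd D N lam s _ (Sum.inl z) = ee nd D (Sum.inl z) from by
              rw [Zfam, if_pos hz], ee_apply, if_neg (by simp), mul_zero]
          · rw [show Zfam nd D N lam s _ (Sum.inl z) (Sum.inr ⟨j, ⟨j, a⟩⟩) = 0 from by
              rw [Zfam, if_neg hz]
              show Zblock nd D N lam s (Sum.inr ⟨j, ⟨j, a⟩⟩) (Sum.inl z) = 0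
              rw [Z_bl]
              refine if_neg ?_
              rintro ⟨-, -, hz1, hz2, hz3⟩
              exact ht (congrArg Sum.inl
                ((LiftZ_eq_iff nd D z ⟨j, (Fin.last (D j), a)⟩).mpr
                  ⟨hz1, by simpa using hz2, hz3.symm⟩)), mul_zero]
        · rw [h1 u, zero_mul]
    | succ tt IH =>
      intro k hk
      by_cases hk2 : D j ≤ (k : ℕ) + tt
      · exact IH k hk2
      · have hklt : (k : ℕ) < D j := by omega
        set k' : Fin (D j + 1) := ⟨(k : ℕ) + 1, by omega⟩ with hk'
        have hr := hrow (Sum.inl ⟨j, (k', a)⟩)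
        rw [Finset.sum_eq_add_of_mem
          (Sum.inl ⟨j, (k', a)⟩ : ZT nd D ((sᶜ).biUnion N ∩ s))
          (Sum.inl ⟨j, (k, a)⟩ : ZT nd D ((sᶜ).biUnion N ∩ s))
          (Finset.mem_univ _) (Finset.mem_univ _)
          (by
            intro h
            have h5 := (LiftZ_eq_iff nd D _ _).mp (Sum.inl.inj h)
            exact absurd (show (k : ℕ) + 1 = (k : ℕ) from h5.2.1) (by omega)) ?_] at hr
        · rw [show Zfam nd D N lam s _ (Sum.inl ⟨j, (k', a)⟩) (Sum.inl ⟨j, (k', a)⟩)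
              = lam from by
            rw [Zfam, if_neg hjs]
            show Zblock nd D N lam s _ _ = lam
            rw [Z_tl, if_pos rfl, if_neg (by rintro ⟨-, h5, -⟩; simp at h5), sub_zero]] at hr
          rw [show Zfam nd D N lam s _ (Sum.inl ⟨j, (k, a)⟩) (Sum.inl ⟨j, (k', a)⟩)
              = -1 from by
            rw [Zfam, if_neg hjs]
            show Zblock nd D N lam s _ _ = -1
            rw [Z_tl, if_neg (by
                intro h
                have h5 := (LiftZ_eq_iff nd D _ _).mp h
                exact absurd (show (k : ℕ) + 1 = (k : ℕ) from h5.2.1) (by omega)),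
              if_pos ⟨rfl, rfl, rfl⟩, zero_sub]] at hr
          have hIH : g (Sum.inl ⟨j, (k', a)⟩) = 0 := IH k' (by simp [hk']; omega)
          rw [hIH, zero_mul, zero_add, mul_neg_one, neg_eq_zero] at hr
          exact hr
        · rintro (z | u) hmem ⟨ht1, ht2⟩
          · by_cases hz : z.1 ∈ s
            · rw [show Zfam nd D N lam s _ (Sum.inl z) = ee nd D (Sum.inl z) from by
                rw [Zfam, if_pos hz], ee_apply,
                if_neg (fun h => ht1 (congrArg Sum.inl (Sum.inl.inj h).symm)), mul_zero]
            · rw [show Zfam nd D N lam s _ (Sum.inl z) (Sum.inl ⟨j, (k', a)⟩) = 0 from by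
                rw [Zfam, if_neg hz]
                show Zblock nd D N lam s (Sum.inl ⟨j, (k', a)⟩) (Sum.inl z) = 0
                rw [Z_tl, if_neg (fun h => ht1 (congrArg Sum.inl h.symm)),
                  if_neg (by
                    rintro ⟨hz1, hz2, hz3⟩
                    have hz2' : (k : ℕ) + 1 = (z.2.1 : ℕ) + 1 := hz2
                    refine ht2 (congrArg Sum.inl
                      ((LiftZ_eq_iff nd D z ⟨j, (k, a)⟩).mpr
                        ⟨hz1.symm, show (z.2.1 : ℕ) = (k : ℕ) by omega, hz3.symm⟩))), sub_zero], mul_zero]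
          · rw [h1 u, zero_mul]
  -- assemble
  rintro (z | u)
  · rcases z with ⟨j, k, a⟩
    by_cases hz : j ∈ s
    · exact h2 j hz k a
    · exact h3 j hz a (D j) k (by omega)
  · exact h1 u

theorem Zblock_rank (hself : ∀ i, i ∈ N i) :
    (Zblock nd D N lam s).rank =
      ∑ i, (D i + 1) * nd i + ∑ i ∈ ((sᶜ).biUnion N) ∩ s, nd i := by
  rw [Matrix.rank_eq_finrank_span_cols,
    show (Zblock nd D N lam s).col = (Zblock nd D N lam s)ᵀ from rfl, ← Zfam_span nd D N lam s,
    finrank_span_eq_card (Zfam_indep nd D N lam s hself)]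
  rw [Fintype.card_sum, Fintype.card_sigma, Fintype.card_sigma]
  simp only [Fintype.card_prod, Fintype.card_fin]
  congr 1
  exact Finset.sum_coe_sort _ (fun j => nd j)

end Zpart

def eRow (q nd D : Fin m → ℕ) :
    ((Fin n ⊕ Σ i, Fin (q i)) ⊕ ((LiftZ nd D) ⊕ Σ _i : Fin m, Σ j, Fin (nd j))) ≃
      ((Fin n ⊕ LiftZ nd D) ⊕ Σ i, (Fin (q i) ⊕ Σ j, Fin (nd j))) where
  toFun
    | .inl (.inl a) => .inl (.inl a)
    | .inl (.inr ⟨i, y⟩) => .inr ⟨i, .inl y⟩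
    | .inr (.inl z) => .inl (.inr z)
    | .inr (.inr ⟨i, w⟩) => .inr ⟨i, .inr w⟩
  invFun
    | .inl (.inl a) => .inl (.inl a)
    | .inl (.inr z) => .inr (.inl z)
    | .inr ⟨i, .inl y⟩ => .inl (.inr ⟨i, y⟩)
    | .inr ⟨i, .inr w⟩ => .inr (.inr ⟨i, w⟩)
  left_inv := by rintro ((a | ⟨i, y⟩) | (z | ⟨i, w⟩)) <;> rfl
  right_inv := by rintro ((a | z) | ⟨i, (y | w)⟩) <;> rfl

def eCol (p nd D : Fin m → ℕ) :
    ((Fin n ⊕ Σ i, Fin (p i)) ⊕ ((LiftZ nd D) ⊕ Σ i, Fin (nd i))) ≃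
      ((Fin n ⊕ LiftZ nd D) ⊕ Σ i, (Fin (p i) ⊕ Fin (nd i))) where
  toFun
    | .inl (.inl a) => .inl (.inl a)
    | .inl (.inr ⟨i, y⟩) => .inr ⟨i, .inl y⟩
    | .inr (.inl z) => .inl (.inr z)
    | .inr (.inr ⟨i, w⟩) => .inr ⟨i, .inr w⟩
  invFun
    | .inl (.inl a) => .inl (.inl a)
    | .inl (.inr z) => .inr (.inl z)
    | .inr ⟨i, .inl y⟩ => .inl (.inr ⟨i, y⟩)
    | .inr ⟨i, .inr w⟩ => .inr (.inr ⟨i, w⟩)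
  left_inv := by rintro ((a | ⟨i, y⟩) | (z | ⟨i, w⟩)) <;> rfl
  right_inv := by rintro ((a | z) | ⟨i, (y | w)⟩) <;> rfl

theorem liftPencil_submatrix (p q nd : Fin m → ℕ)
    (A : Matrix (Fin n) (Fin n) ℝ)
    (B : ∀ i, Matrix (Fin n) (Fin (p i)) ℝ)
    (C : ∀ i, Matrix (Fin (q i)) (Fin n) ℝ)
    (N : Fin m → Finset (Fin m)) (D : Fin m → ℕ) (lam : ℂ) (s : Finset (Fin m)) :
    (liftPencil p q nd D A B C N (fun j _ => D j) lam s).submatrix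
        (eRow q nd D) (eCol p nd D) =
      fromBlocks (pencil p q A B C lam s) 0 0 (Zblock nd D N lam s) := by
  ext r c
  rcases r with (a | ⟨i, y⟩) | (z | ⟨i, w⟩) <;>
    rcases c with (a' | ⟨i', y'⟩) | (z' | ⟨i', w'⟩) <;>
      simp [eRow, eCol, liftPencil, pencil, Zblock, Alift, Blift, Clift, fromBlocks,
        Matrix.one_apply, Matrix.smul_apply, sub_eq_zero]

end

/-- With state holding (every follower of agent `j`, including `j` itself,
measures the maximally delayed state `z_j(t − D j)`), the lifted extended
pencil satisfies, for every `λ ∈ ℂ` and every channel subset `s`,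
`rank [λI − Â, B̂_s; Ĉ_{m−s}, 0]
  = rank [λI − A, B_s; C_{m−s}, 0] + Σ_i (D i + 1) n_i + Σ_{i ∈ N_{m−s} ∩ s} n_i`. -/
theorem stmt17 {n m : ℕ} (p q nd : Fin m → ℕ)
    (A : Matrix (Fin n) (Fin n) ℝ)
    (B : ∀ i, Matrix (Fin n) (Fin (p i)) ℝ)
    (C : ∀ i, Matrix (Fin (q i)) (Fin n) ℝ)
    (N : Fin m → Finset (Fin m))
    (D : Fin m → ℕ)
    (hself : ∀ i, i ∈ N i) :
    ∀ (lam : ℂ) (s : Finset (Fin m)),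
      (liftPencil p q nd D A B C N (fun j _ => D j) lam s).rank =
        (pencil p q A B C lam s).rank + ∑ i, (D i + 1) * nd i +
          ∑ i ∈ ((sᶜ).biUnion N) ∩ s, nd i := by
  intro lam s
  have hsub := liftPencil_submatrix p q nd A B C N D lam s
  have h1 : (liftPencil p q nd D A B C N (fun j _ => D j) lam s).rank =
      ((liftPencil p q nd D A B C N (fun j _ => D j) lam s).submatrix
        (eRow q nd D) (eCol p nd D)).rank :=
    (myrank_submatrix _ (eRow q nd D) (eCol p nd D)).symm
  rw [h1, hsub, myrank_fromBlocks_diag, Zblock_rank nd D N lam s hself, ← add_assoc]
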